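/- Let n be a positive integer and ζ_n a primitive n-th root of unity in ℂ. In the ring of formal power series ℂ[[x]], one has (1 - (1+x)^n) · ( Σ_{k=1}^{∞} z̄_n(k; ζ_n) x^k ) = n·x + (1 - (1+x)^n); equivalently, Σ_{k=1}^{∞} z̄_n(k; ζ_n) x^k = n·x/(1-(1+x)^n) + 1. -/

import Mathlib

open Finset

/-- The set of tuples `(m_1,...,m_r)` with `n > m_1 > m_2 > ... > m_r > 0`. -/
def msets (n r : ℕ) : Finset (Fin r → Fin n) :=
  Finset.univ.filter fun m =>
    (∀ i j : Fin r, i < j → m j < m i) ∧ ∀ i, 0 < (m i : ℕ)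

/-- The set of tuples `(m_1,...,m_r)` with `n > m_1 ≥ m_2 ≥ ... ≥ m_r > 0`. -/
def msetsStar (n r : ℕ) : Finset (Fin r → Fin n) :=
  Finset.univ.filter fun m =>
    (∀ i j : Fin r, i ≤ j → m j ≤ m i) ∧ ∀ i, 0 < (m i : ℕ)

/-- The finite multiple harmonic q-series
`z_n(k_1,…,k_r; q) = Σ_{n > m_1 > … > m_r > 0} Π_i q^{(k_i-1)m_i}/[m_i]_q^{k_i}`,
where `[m]_q = (1-q^m)/(1-q)`. -/
noncomputable def z (n : ℕ) {r : ℕ} (k : Fin r → ℕ) (q : ℂ) : ℂ :=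
  ∑ m ∈ msets n r,
    ∏ i, q ^ ((k i - 1) * (m i : ℕ)) / ((1 - q ^ (m i : ℕ)) / (1 - q)) ^ (k i)

/-- The star version `z*_n(k; q)`, summed over `n > m_1 ≥ … ≥ m_r > 0`. -/
noncomputable def zstar (n : ℕ) {r : ℕ} (k : Fin r → ℕ) (q : ℂ) : ℂ :=
  ∑ m ∈ msetsStar n r,
    ∏ i, q ^ ((k i - 1) * (m i : ℕ)) / ((1 - q ^ (m i : ℕ)) / (1 - q)) ^ (k i)

/-- The modified value `z̄_n(k;q) = (1-q)^{-wt(k)} z_n(k;q)`. -/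
noncomputable def zbar (n : ℕ) {r : ℕ} (k : Fin r → ℕ) (q : ℂ) : ℂ :=
  (1 - q)⁻¹ ^ (∑ i, k i) * z n k q

/-- The modified star value `z̄*_n(k;q) = (1-q)^{-wt(k)} z*_n(k;q)`. -/
noncomputable def zstarbar (n : ℕ) {r : ℕ} (k : Fin r → ℕ) (q : ℂ) : ℂ :=
  (1 - q)⁻¹ ^ (∑ i, k i) * zstar n k q

/-- `I(k,r,s)`: the set of indices (tuples of positive integers) of weight `k`,
depth `r` and height `s`. -/
def indexSet3 (k r s : ℕ) : Finset (Fin r → ℕ) :=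
  (Finset.Nat.antidiagonalTuple r k).filter fun a =>
    (∀ i, 1 ≤ a i) ∧ (Finset.univ.filter fun i => 2 ≤ a i).card = s

/-- `I(k,r)`: the set of indices of weight `k` and depth `r`. -/
def indexSet2 (k r : ℕ) : Finset (Fin r → ℕ) :=
  (Finset.Nat.antidiagonalTuple r k).filter fun a => ∀ i, 1 ≤ a i

/-- The one-variable finite q-multiple polylogarithm
`L_{k_1,…,k_r}^{(n)}(t;q) = Σ_{n > m_1 > … > m_r > 0} t^{m_1} / Π_i (1-q^{m_i})^{k_i}`,
with `L_∅(t) = 1`. -/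
noncomputable def Lpoly (n : ℕ) {r : ℕ} (k : Fin r → ℕ) (q t : ℂ) : ℂ :=
  ∑ m ∈ msets n r,
    ∏ i : Fin r, (if i.val = 0 then t ^ (m i : ℕ) else 1) / (1 - q ^ (m i : ℕ)) ^ (k i)

/-- The star version `L*_{k_1,…,k_r}^{(n)}(t;q)`, summed over `n > m_1 ≥ … ≥ m_r > 0`. -/
noncomputable def LpolyStar (n : ℕ) {r : ℕ} (k : Fin r → ℕ) (q t : ℂ) : ℂ :=
  ∑ m ∈ msetsStar n r,
    ∏ i : Fin r, (if i.val = 0 then t ^ (m i : ℕ) else 1) / (1 - q ^ (m i : ℕ)) ^ (k i)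

/-- `(1 - (1+x)^n)·(Σ_{k≥1} z̄_n(k;ζ_n) x^k) = n·x + (1 - (1+x)^n)`
in `ℂ[[x]]`, i.e. `Σ_{k≥1} z̄_n(k;ζ_n) x^k = n·x/(1-(1+x)^n) + 1`. -/
theorem zbar_depth_one_generating_function (n : ℕ) (hn : 0 < n) (ζ : ℂ)
    (hζ : IsPrimitiveRoot ζ n) :
    (1 - (1 + PowerSeries.X) ^ n) *
        (PowerSeries.mk fun k => if k = 0 then (0 : ℂ)
          else zbar n (fun _ : Fin 1 => k) ζ) =
      PowerSeries.C (n : ℂ) * PowerSeries.X + (1 - (1 + PowerSeries.X) ^ n) := by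
  classical
  have hζ0 : ζ ≠ 0 := by
    intro h
    have := hζ.pow_eq_one
    rw [h, zero_pow hn.ne'] at this
    exact zero_ne_one this
  -- basic facts about ζ^m for 1 ≤ m < n
  have hne1 : ∀ m ∈ Ico 1 n, ζ ^ m ≠ 1 := fun m hm =>
    hζ.pow_ne_one_of_pos_of_lt (Nat.one_le_iff_ne_zero.mp (mem_Ico.mp hm).1) (mem_Ico.mp hm).2
  have hsub : ∀ m ∈ Ico 1 n, (1 : ℂ) - ζ ^ m ≠ 0 := fun m hm =>
    sub_ne_zero.mpr (Ne.symm (hne1 m hm))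
  have hζne1 : ∀ m ∈ Ico 1 n, ζ ≠ 1 := fun m hm => by
    have h1 : 1 < n := lt_of_le_of_lt (mem_Ico.mp hm).1 (mem_Ico.mp hm).2
    intro h; exact hζ.pow_ne_one_of_pos_of_lt one_ne_zero h1 (by rw [h, one_pow])
  -- Step A: depth-one z as sum over Ico 1 n
  have hz : ∀ k : ℕ, z n (fun _ : Fin 1 => k) ζ
      = ∑ m ∈ Ico 1 n, ζ ^ ((k - 1) * m) / ((1 - ζ ^ m) / (1 - ζ)) ^ k := by
    intro k
    rw [z]
    refine Finset.sum_nbij' (fun m => ((m 0 : ℕ))) (fun a => fun _ => ⟨a % n, Nat.mod_lt _ hn⟩)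
      ?_ ?_ ?_ ?_ ?_
    · intro m hm
      simp only [msets, mem_filter, mem_univ, true_and] at hm
      exact mem_Ico.mpr ⟨hm.2 0, (m 0).2⟩
    · intro a ha
      simp only [msets, mem_filter, mem_univ, true_and]
      constructor
      · intro i j hij; exact absurd (Subsingleton.elim i j) (ne_of_lt hij)
      · intro i
        simp only [Nat.mod_eq_of_lt (mem_Ico.mp ha).2]
        exact (mem_Ico.mp ha).1
    · intro m hm
      simp only [msets, mem_filter, mem_univ, true_and] at hm
      funext i
      have : i = 0 := Subsingleton.elim i 0
      subst this
      exact Fin.ext (by simp [Nat.mod_eq_of_lt (m 0).2])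
    · intro a ha
      simp [Nat.mod_eq_of_lt (mem_Ico.mp ha).2]
    · intro m hm
      rw [Fin.prod_univ_one]
  -- w and the geometric series
  set w : ℕ → ℂ := fun m => ζ ^ m / (1 - ζ ^ m) with hw
  set S : ℕ → PowerSeries ℂ := fun m => PowerSeries.mk fun k => w m ^ k with hS
  have hgeom : ∀ m : ℕ, (1 - PowerSeries.C (w m) * PowerSeries.X) * S m = 1 := by
    intro m
    have h1 : (1 - PowerSeries.C (w m) * PowerSeries.X) * S m
        = S m - PowerSeries.C (w m) * (PowerSeries.X * S m) := by ring
    rw [h1]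
    ext k
    cases k with
    | zero => simp [hS]
    | succ k => simp [hS, PowerSeries.coeff_succ_X_mul, pow_succ, mul_comm]
  -- Step B: the generating series as a sum of geometric-type series
  have hmk : (PowerSeries.mk fun k => if k = 0 then (0 : ℂ)
        else zbar n (fun _ : Fin 1 => k) ζ)
      = ∑ m ∈ Ico 1 n, PowerSeries.C (1 - ζ ^ m)⁻¹ * (PowerSeries.X * S m) := by
    have hzbar : ∀ k : ℕ, zbar n (fun _ : Fin 1 => k + 1) ζ
        = ∑ m ∈ Ico 1 n, (1 - ζ ^ m)⁻¹ * w m ^ k := by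
      intro k
      rw [zbar, hz, Finset.mul_sum]
      refine Finset.sum_congr rfl fun m hm => ?_
      have h1 : (1 : ℂ) - ζ ≠ 0 := sub_ne_zero.mpr (Ne.symm (hζne1 m hm))
      have h2 := hsub m hm
      have h3 : (ζ : ℂ) ^ m ≠ 0 := pow_ne_zero _ hζ0
      simp only [Fin.sum_univ_one, Nat.add_sub_cancel, hw, div_pow]
      rw [← pow_mul, mul_comm m k, pow_mul]
      field_simp
      have h4 : (1 / (1 - ζ)) ^ (k + 1) * (1 - ζ) ^ (k + 1) = 1 := by
        rw [← mul_pow, one_div, inv_mul_cancel₀ h1, one_pow]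
      linear_combination (1 - ζ ^ m) * (1 - ζ ^ m) ^ k * h4
    ext k
    rw [map_sum]
    cases k with
    | zero => simp
    | succ k =>
      simp only [Nat.succ_ne_zero, if_false, PowerSeries.coeff_mk, hzbar k]
      refine Finset.sum_congr rfl fun m hm => ?_
      rw [PowerSeries.coeff_C_mul, PowerSeries.coeff_succ_X_mul]
      simp [hS]
  -- Step C: polynomial product identity, lifted to power series
  have hinj : Set.InjOn (fun m => ζ ^ m) (range n) := by
    intro a ha b hb hab
    exact hζ.pow_inj (mem_range.mp ha) (mem_range.mp hb) hab
  have himg : (range n).image (fun m => ζ ^ m) = Polynomial.nthRootsFinset n (1 : ℂ) := by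
    apply Finset.eq_of_subset_of_card_le
    · intro x hx
      obtain ⟨m, _, rfl⟩ := Finset.mem_image.mp hx
      rw [Polynomial.mem_nthRootsFinset hn, ← pow_mul, mul_comm, pow_mul, hζ.pow_eq_one, one_pow]
    · rw [hζ.card_nthRootsFinset, Finset.card_image_of_injOn hinj, Finset.card_range]
  have hprodC : ∀ s : ℂ, ∏ m ∈ range n, (s - ζ ^ m) = s ^ n - 1 := by
    intro s
    have h2 := congrArg (Polynomial.eval s) (Polynomial.X_pow_sub_one_eq_prod hn hζ)
    simp only [Polynomial.eval_prod, Polynomial.eval_sub, Polynomial.eval_pow,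
      Polynomial.eval_X, Polynomial.eval_C, Polynomial.eval_one] at h2
    rw [← himg, Finset.prod_image hinj] at h2
    exact h2.symm
  have hpoly : (∏ m ∈ range n, (1 - Polynomial.C (ζ ^ m) * Polynomial.X) : Polynomial ℂ)
      = 1 - Polynomial.X ^ n := by
    apply Polynomial.funext
    intro t
    simp only [Polynomial.eval_prod, Polynomial.eval_sub, Polynomial.eval_pow,
      Polynomial.eval_X, Polynomial.eval_C, Polynomial.eval_one, Polynomial.eval_mul]
    rcases eq_or_ne t 0 with rfl | ht
    · simp [zero_pow hn.ne']
    · have hterm : ∀ m ∈ range n, (1 : ℂ) - ζ ^ m * t = t * (t⁻¹ - ζ ^ m) := by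
        intro m _; field_simp
      rw [Finset.prod_congr rfl hterm, Finset.prod_mul_distrib, Finset.prod_const, hprodC,
        Finset.card_range]
      rw [mul_sub, inv_pow, mul_inv_cancel₀ (pow_ne_zero _ ht)]; ring
  set Y : PowerSeries ℂ := 1 + PowerSeries.X with hY
  have hP : ∏ m ∈ range n, (1 - PowerSeries.C (ζ ^ m) * Y) = 1 - Y ^ n := by
    have h2 := congrArg (Polynomial.aeval Y) hpoly
    simpa only [map_prod, map_sub, map_one, map_mul, map_pow, Polynomial.aeval_X,
      Polynomial.aeval_C, PowerSeries.algebraMap_apply, Algebra.algebraMap_self, RingHom.id_apply] using h2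
  -- Step D: the cofactors Q m are geometric sums
  set Q : ℕ → PowerSeries ℂ := fun m => ∏ j ∈ (range n).erase m,
    (1 - PowerSeries.C (ζ ^ j) * Y) with hQ
  have hQfac : ∀ m ∈ range n, (1 - PowerSeries.C (ζ ^ m) * Y) * Q m = 1 - Y ^ n := by
    intro m hm
    have h := Finset.mul_prod_erase (range n) (fun j => 1 - PowerSeries.C (ζ ^ j) * Y) hm
    rw [hP] at h
    exact h
  have hane : ∀ m : ℕ, (1 - PowerSeries.C (ζ ^ m) * Y) ≠ 0 := by
    intro m h0
    have h1 := congrArg (PowerSeries.coeff 1) h0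
    simp only [map_sub, PowerSeries.coeff_one, PowerSeries.coeff_C_mul, hY, map_add,
      PowerSeries.coeff_one_X] at h1
    simp at h1
    exact hζ0 h1.1
  have hQgeom : ∀ m ∈ range n, Q m = ∑ k ∈ range n, (PowerSeries.C (ζ ^ m) * Y) ^ k := by
    intro m hm
    apply mul_left_cancel₀ (hane m)
    rw [hQfac m hm]
    have hg := geom_sum_mul (PowerSeries.C (ζ ^ m) * Y) n
    have hx : (PowerSeries.C (ζ ^ m) * Y) ^ n = Y ^ n := by
      rw [mul_pow, ← map_pow, ← pow_mul, mul_comm m n, pow_mul, hζ.pow_eq_one, one_pow, map_one,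
        one_mul]
    rw [hx] at hg
    linear_combination hg
  -- Step E: sum of cofactors is n
  have hQsum : ∑ m ∈ range n, Q m = PowerSeries.C (n : ℂ) := by
    rw [Finset.sum_congr rfl hQgeom, Finset.sum_comm]
    have hterm : ∀ k ∈ range n, ∑ m ∈ range n, (PowerSeries.C (ζ ^ m) * Y) ^ k
        = PowerSeries.C (∑ m ∈ range n, (ζ ^ k) ^ m) * Y ^ k := by
      intro k _
      have hpt : ∀ m ∈ range n, (PowerSeries.C (ζ ^ m) * Y) ^ k
          = PowerSeries.C ((ζ ^ k) ^ m) * Y ^ k := by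
        intro m _
        rw [mul_pow, ← map_pow, ← pow_mul, mul_comm m k, pow_mul]
      rw [Finset.sum_congr rfl hpt, ← Finset.sum_mul, ← map_sum]
    rw [Finset.sum_congr rfl hterm]
    have hzero : ∀ k ∈ range n, k ≠ 0 →
        PowerSeries.C (∑ m ∈ range n, (ζ ^ k) ^ m) * Y ^ k = 0 := by
      intro k hk hk0
      have hx : ζ ^ k ≠ 1 :=
        hζ.pow_ne_one_of_pos_of_lt hk0 (mem_range.mp hk)
      have hzs : ∑ m ∈ range n, (ζ ^ k) ^ m = 0 := by
        have hg := geom_sum_mul (ζ ^ k) n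
        rw [← pow_mul, mul_comm k n, pow_mul, hζ.pow_eq_one, one_pow, sub_self] at hg
        exact (mul_eq_zero.mp hg).resolve_right (sub_ne_zero.mpr hx)
      simp [hzs]
    rw [Finset.sum_eq_single_of_mem 0 (mem_range.mpr hn) hzero]
    simp
  -- Step F: assemble
  have hfac : ∀ m ∈ Ico 1 n,
      (1 - PowerSeries.C (ζ ^ m) * Y) * (PowerSeries.C (1 - ζ ^ m)⁻¹ * (PowerSeries.X * S m))
        = PowerSeries.X := by
    intro m hm
    have h2 := hsub m hm
    have hsplit : (1 - PowerSeries.C (ζ ^ m) * Y)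
        = PowerSeries.C (1 - ζ ^ m) * (1 - PowerSeries.C (w m) * PowerSeries.X) := by
      have hwm : (1 - ζ ^ m) * w m = ζ ^ m := by
        rw [hw]; field_simp
      have : PowerSeries.C (1 - ζ ^ m) * (1 - PowerSeries.C (w m) * PowerSeries.X)
          = PowerSeries.C (1 - ζ ^ m)
            - PowerSeries.C ((1 - ζ ^ m) * w m) * PowerSeries.X := by
        rw [map_mul]; ring
      rw [this, hwm, map_sub, map_one, hY]
      ring
    rw [hsplit]
    have hcc : PowerSeries.C (1 - ζ ^ m) * PowerSeries.C (1 - ζ ^ m)⁻¹ = 1 := by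
      rw [← map_mul, mul_inv_cancel₀ h2, map_one]
    calc PowerSeries.C (1 - ζ ^ m) * (1 - PowerSeries.C (w m) * PowerSeries.X) *
          (PowerSeries.C (1 - ζ ^ m)⁻¹ * (PowerSeries.X * S m))
        = (PowerSeries.C (1 - ζ ^ m) * PowerSeries.C (1 - ζ ^ m)⁻¹) *
          (((1 - PowerSeries.C (w m) * PowerSeries.X) * S m) * PowerSeries.X) := by ring
      _ = PowerSeries.X := by rw [hcc, hgeom m]; ring
  rw [hmk, Finset.mul_sum]
  have hterm2 : ∀ m ∈ Ico 1 n,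
      (1 - Y ^ n) * (PowerSeries.C (1 - ζ ^ m)⁻¹ * (PowerSeries.X * S m))
        = Q m * PowerSeries.X := by
    intro m hm
    have hmr : m ∈ range n := mem_range.mpr (mem_Ico.mp hm).2
    calc (1 - Y ^ n) * (PowerSeries.C (1 - ζ ^ m)⁻¹ * (PowerSeries.X * S m))
        = ((1 - PowerSeries.C (ζ ^ m) * Y) * Q m) *
          (PowerSeries.C (1 - ζ ^ m)⁻¹ * (PowerSeries.X * S m)) := by rw [hQfac m hmr]
      _ = Q m * ((1 - PowerSeries.C (ζ ^ m) * Y) *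
          (PowerSeries.C (1 - ζ ^ m)⁻¹ * (PowerSeries.X * S m))) := by ring
      _ = Q m * PowerSeries.X := by rw [hfac m hm]
  rw [Finset.sum_congr rfl hterm2, ← Finset.sum_mul]
  have hsplit0 : Q 0 + ∑ m ∈ Ico 1 n, Q m = PowerSeries.C (n : ℂ) := by
    rw [← hQsum, Finset.range_eq_Ico, Finset.sum_eq_sum_Ico_succ_bot hn]
  have hQ0 : (- PowerSeries.X) * Q 0 = 1 - Y ^ n := by
    have := hQfac 0 (mem_range.mpr hn)
    rw [pow_zero, map_one, hY] at this
    linear_combination this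
  linear_combination PowerSeries.X * hsplit0 + hQ0
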